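/- Let q ≥ 1 be a real number. For every u ∈ Ω and every real λ with -(q+1) ≤ λ ≤ q+1, one has 1 - λu + qu² ≠ 0. -/

import Mathlib

/-- The interior `Ω` of the region `C`: `|u| < q^(-1/2)`, and if `u` is real
then `|u| < 1/q`. -/
def Omega (q : ℝ) : Set ℂ :=
  {u : ℂ | ‖u‖ < (Real.sqrt q)⁻¹ ∧ (u.im = 0 → |u.re| < 1 / q)}

/-- For `u ∈ Ω` and `λ ∈ [-(q+1), q+1]`, one has `1 - λu + qu² ≠ 0`. -/
theorem one_sub_mul_add_sq_ne_zero (q : ℝ) (hq : 1 ≤ q)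
    (u : ℂ) (hu : u ∈ Omega q) (lam : ℝ)
    (hlam₁ : -(q + 1) ≤ lam) (hlam₂ : lam ≤ q + 1) :
    1 - (lam : ℂ) * u + (q : ℂ) * u ^ 2 ≠ 0 := by
  obtain ⟨habs, hre⟩ := hu
  have hq0 : (0:ℝ) < q := by linarith
  intro h
  by_cases him : u.im = 0
  · -- real case
    have hx : |u.re| < 1 / q := hre him
    set x := u.re with hxdef
    have hux : u = (x : ℂ) := Complex.ext rfl (by simp [him])
    rw [hux] at h
    have hr : 1 - lam * x + q * x ^ 2 = 0 := by exact_mod_cast h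
    have hx0 : x ≠ 0 := by
      rintro hx0
      rw [hx0] at hr
      norm_num at hr
    have ht : 0 < |x| := abs_pos.mpr hx0
    have hqt : q * |x| < 1 := by
      rw [lt_div_iff₀ hq0] at hx; linarith [hx]
    have ht1 : |x| < 1 := by
      have : (1:ℝ) / q ≤ 1 := by
        rw [div_le_one hq0]; linarith
      linarith [hre him]
    have h2 : lam * x ≤ (q + 1) * |x| := by
      calc lam * x ≤ |lam * x| := le_abs_self _
        _ = |lam| * |x| := abs_mul _ _
        _ ≤ (q + 1) * |x| := by
            apply mul_le_mul_of_nonneg_right _ (abs_nonneg x)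
            exact abs_le.mpr ⟨hlam₁, hlam₂⟩
    have hprod : 0 < (1 - q * |x|) * (1 - |x|) :=
      mul_pos (by linarith) (by linarith)
    nlinarith [sq_abs x, hprod, h2, hr]
  · -- non-real case
    have h1 := congrArg Complex.re h
    have h2 := congrArg Complex.im h
    simp [pow_two, Complex.mul_re, Complex.mul_im, Complex.add_re, Complex.add_im,
      Complex.sub_re, Complex.sub_im, Complex.ofReal_re, Complex.ofReal_im] at h1 h2
    -- h2 gives lam = 2 q u.re
    have hlam : lam = 2 * q * u.re := by
      have := h2
      field_simp at this
      rcases mul_eq_zero.mp (by nlinarith [this] : (lam - 2 * q * u.re) * u.im = 0) with h' | h'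
      · linarith
      · exact absurd h' him
    have hsum : q * (u.re ^ 2 + u.im ^ 2) = 1 := by
      rw [hlam] at h1; nlinarith [h1]
    -- but |u| < (sqrt q)⁻¹ gives q * normSq u < 1
    have hns : Complex.normSq u = u.re ^ 2 + u.im ^ 2 := by
      simp [Complex.normSq_apply]; ring
    have habs2 : ‖u‖ ^ 2 < ((Real.sqrt q)⁻¹) ^ 2 := by
      apply pow_lt_pow_left₀ habs (norm_nonneg u) (by norm_num)
    have hinv : ((Real.sqrt q)⁻¹) ^ 2 = q⁻¹ := by
      rw [inv_pow, Real.sq_sqrt hq0.le]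
    have : Complex.normSq u < q⁻¹ := by
      rw [← Complex.sq_norm u, ← hinv]; exact habs2
    rw [hns] at this
    have : q * (u.re ^ 2 + u.im ^ 2) < 1 := by
      have := (mul_lt_mul_iff_right₀ hq0).mpr this
      rwa [mul_inv_cancel₀ hq0.ne'] at this
    linarith
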